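/- For all n ≥ 1 and k ≥ 1, the number of k-dimensional F-subspaces of F^{n+1} equals the number of k-dimensional F-subspaces of F^n, plus the number of (k−1)-dimensional F-subspaces of F^n, plus (q^n − 1) times the number of (k−1)-dimensional F-subspaces of F^{n−1}. -/

import Mathlib

set_option linter.unusedSectionVars false
set_option maxHeartbeats 1000000

open Module Submodule

lemma card_ne_aux {α : Type*} [Finite α] [DecidableEq α] (a : α) :
    Nat.card {x : α // x ≠ a} = Nat.card α - 1 := by
  have := Fintype.ofFinite α
  simp only [Nat.card_eq_fintype_card]
  exact (Fintype.card_subtype_compl _).trans (by rw [Fintype.card_subtype_eq])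

variable {F : Type} [Field F] [Fintype F]

noncomputable def NN (F V : Type) [Field F] [AddCommGroup V] [Module F V] (k : ℕ) : ℕ :=
  Nat.card {X : Submodule F V // finrank F X = k}

lemma finite_submodule (V : Type) [AddCommGroup V] [Module F V] [Finite V] :
    Finite (Submodule F V) :=
  Finite.of_injective (fun X : Submodule F V => (X : Set V)) fun _ _ h => SetLike.coe_injective h

lemma card_sigma_const {α : Type*} [Finite α] (g : α → Type*) [∀ a, Finite (g a)]
    (c : ℕ) (h : ∀ a, Nat.card (g a) = c) : Nat.card (Σ a, g a) = c * Nat.card α := by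
  classical
  have := Fintype.ofFinite α
  have : ∀ a, Fintype (g a) := fun a => Fintype.ofFinite (g a)
  simp only [Nat.card_eq_fintype_card, Fintype.card_sigma]
  calc (∑ a, Fintype.card (g a)) = ∑ a : α, c := by
        refine Finset.sum_congr rfl fun a _ => ?_
        rw [← Nat.card_eq_fintype_card, h a]
    _ = c * Fintype.card α := by rw [Finset.sum_const, smul_eq_mul, mul_comm, Fintype.card]

lemma NN_eq_of_equiv {V W : Type} [AddCommGroup V] [Module F V] [AddCommGroup W] [Module F W]
    (e : V ≃ₗ[F] W) (k : ℕ) : NN F V k = NN F W k := by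
  apply Nat.card_congr
  refine Equiv.subtypeEquiv (Submodule.orderIsoMapComap e).toEquiv fun X => ?_
  show finrank F X = k ↔ finrank F (X.map (e : V →ₗ[F] W)) = k
  rw [LinearEquiv.finrank_map_eq]

lemma NN_eq_of_finrank_eq {V W : Type} [AddCommGroup V] [Module F V] [AddCommGroup W] [Module F W]
    [FiniteDimensional F V] [FiniteDimensional F W]
    (h : finrank F V = finrank F W) (k : ℕ) : NN F V k = NN F W k :=
  NN_eq_of_equiv (FiniteDimensional.nonempty_linearEquiv_of_finrank_eq h).some k

lemma card_split {α : Type*} [Finite α] (p q : α → Prop) :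
    Nat.card {a // p a} = Nat.card {a // p a ∧ q a} + Nat.card {a // p a ∧ ¬ q a} := by
  classical
  have := Fintype.ofFinite α
  have e : {a // p a} ≃ {x : {a // p a} // q x.1} ⊕ {x : {a // p a} // ¬ q x.1} :=
    (Equiv.sumCompl _).symm
  rw [Nat.card_congr e, Nat.card_congr (Equiv.sumCongr
    (Equiv.subtypeSubtypeEquivSubtypeInter p q)
    (Equiv.subtypeSubtypeEquivSubtypeInter p (fun a => ¬ q a)))]
  simp [Nat.card_eq_fintype_card]

lemma card_subspaces_le {M : Type} [AddCommGroup M] [Module F M] [Finite M]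
    (p : Submodule F M) (k : ℕ) :
    Nat.card {X : Submodule F M // finrank F X = k ∧ X ≤ p} = NN F (↥p) k := by
  symm
  apply Nat.card_congr
  refine (Equiv.subtypeEquiv (Submodule.MapSubtype.orderIso p).toEquiv
    fun X => ?_).trans ((Equiv.subtypeSubtypeEquivSubtypeInter _ _).trans
    (Equiv.subtypeEquivRight fun X => and_comm))
  show finrank F X = k ↔ finrank F (X.map p.subtype) = k
  rw [Submodule.finrank_map_subtype_eq]

section A

variable {V : Type} [AddCommGroup V] [Module F V] [FiniteDimensional F V]

/-- the subspace generated by `W` on the hyperplane and the vector `(u, 1)` -/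
noncomputable def cc (W : Submodule F V) (u : V) : Submodule F (V × F) :=
  W.map (LinearMap.inl F V F) ⊔ Submodule.span F {(u, (1 : F))}

lemma mem_cc_self (W : Submodule F V) (u : V) : (u, (1:F)) ∈ cc W u :=
  le_sup_right (α := Submodule F (V × F)) (Submodule.mem_span_singleton_self _)

lemma map_inl_le_cc (W : Submodule F V) (u : V) :
    W.map (LinearMap.inl F V F) ≤ cc W u := le_sup_left

lemma comap_cc (W : Submodule F V) (u : V) :
    (cc W u).comap (LinearMap.inl F V F) = W := by
  ext x
  simp only [Submodule.mem_comap]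
  constructor
  · intro hx
    rcases Submodule.mem_sup.mp hx with ⟨y, hy, z, hz, hyz⟩
    rcases Submodule.mem_map.mp hy with ⟨w, hw, rfl⟩
    rcases Submodule.mem_span_singleton.mp hz with ⟨a, rfl⟩
    have ha : a = 0 := by
      have := congrArg Prod.snd hyz
      simpa using this
    subst ha
    have h1 : w = x := by
      have := congrArg Prod.fst hyz
      simpa using this
    rwa [← h1]
  · intro hx
    exact map_inl_le_cc W u (Submodule.mem_map_of_mem hx)

lemma finrank_cc (W : Submodule F V) (u : V) :
    finrank F (cc W u) = finrank F W + 1 := by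
  have hinf : W.map (LinearMap.inl F V F) ⊓ Submodule.span F {(u, (1:F))} = ⊥ := by
    rw [eq_bot_iff]
    rintro x ⟨hx1, hx2⟩
    rcases Submodule.mem_span_singleton.mp hx2 with ⟨a, rfl⟩
    rcases Submodule.mem_map.mp hx1 with ⟨w, hw, hww⟩
    have h2 := congrArg Prod.snd hww
    simp only [LinearMap.inl_apply, Prod.smul_snd, smul_eq_mul, mul_one] at h2
    subst h2
    simp
  have hsup := Submodule.finrank_sup_add_finrank_inf_eq
    (W.map (LinearMap.inl F V F)) (Submodule.span F {(u, (1:F))})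
  rw [hinf] at hsup
  have hspan : finrank F (Submodule.span F {(u, (1:F))}) = 1 := by
    apply finrank_span_singleton
    intro h
    have := congrArg Prod.snd h
    simp at this
  have hmap : finrank F (W.map (LinearMap.inl F V F)) = finrank F W := by
    exact (LinearEquiv.finrank_eq
      (Submodule.equivMapOfInjective _ LinearMap.inl_injective W)).symm
  rw [hspan, hmap, finrank_bot] at hsup
  show finrank F ↥(W.map (LinearMap.inl F V F) ⊔ Submodule.span F {(u, (1:F))})
    = finrank F W + 1
  omega

lemma cc_not_le_ker (W : Submodule F V) (u : V) :
    ¬ cc W u ≤ LinearMap.ker (LinearMap.snd F V F) := by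
  intro h
  have := h (mem_cc_self W u)
  rw [LinearMap.mem_ker] at this
  simp at this

lemma cc_congr (W : Submodule F V) {u u' : V} (h : u - u' ∈ W) : cc W u = cc W u' := by
  have key : ∀ v v' : V, v - v' ∈ W → cc W v ≤ cc W v' := by
    intro v v' hv
    apply sup_le (map_inl_le_cc W v')
    rw [Submodule.span_le, Set.singleton_subset_iff]
    have : (v, (1:F)) = LinearMap.inl F V F (v - v') + (v', (1:F)) := by
      simp [Prod.ext_iff]
    rw [this]
    exact (cc W v').add_mem (map_inl_le_cc W v' (Submodule.mem_map_of_mem hv))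
      (mem_cc_self W v')
  exact le_antisymm (key u u' h) (key u' u (by simpa using W.neg_mem h))

lemma lemA (j : ℕ) :
    NN F (V × F) (j + 1)
      = NN F V (j + 1) + Fintype.card F ^ (finrank F V - j) * NN F V j := by
  classical
  haveI : Finite V := Module.finite_of_finite F
  haveI : Finite (V × F) := inferInstance
  haveI : Finite (Submodule F (V × F)) := finite_submodule _
  haveI : Finite (Submodule F V) := finite_submodule _
  set H := LinearMap.ker (LinearMap.snd F V F) with hH
  rw [NN, card_split (fun X : Submodule F (V × F) => finrank F X = j + 1) (fun X => X ≤ H)]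
  congr 1
  · -- X ≤ H part
    rw [card_subspaces_le]
    apply NN_eq_of_finrank_eq
    have hr : LinearMap.range (LinearMap.snd F V F) = ⊤ := by
      rw [LinearMap.range_eq_top]
      intro c; exact ⟨(0, c), rfl⟩
    have h1 := LinearMap.finrank_range_add_finrank_ker (LinearMap.snd F V F)
    rw [hr, finrank_top, finrank_self] at h1
    have h2 : finrank F (V × F) = finrank F V + 1 := by
      rw [Module.finrank_prod, finrank_self]
    rw [hH]
    omega
  · -- ¬ X ≤ H part : bijection with Σ W, V ⧸ W
    have hbij : Function.Bijective
        (fun p : (Σ W : {W : Submodule F V // finrank F W = j}, V ⧸ W.1) =>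
          (⟨Quotient.liftOn p.2 (fun v => cc p.1.1 v)
              (fun a b hab => cc_congr p.1.1 ((Submodule.quotientRel_def p.1.1).mp hab)),
            by
              obtain ⟨W, u⟩ := p
              induction u using Quotient.inductionOn with
              | h v =>
                refine ⟨?_, ?_⟩
                · show finrank F (cc W.1 v) = j + 1
                  rw [finrank_cc, W.2]
                · exact cc_not_le_ker W.1 v⟩ :
            {X : Submodule F (V × F) // finrank F X = j + 1 ∧ ¬ X ≤ H})) := by
      constructor
      · rintro ⟨W, u⟩ ⟨W', u'⟩ h
        induction u using Quotient.inductionOn with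
        | h v =>
        induction u' using Quotient.inductionOn with
        | h v' =>
        have hval : cc W.1 v = cc W'.1 v' := congrArg Subtype.val h
        have hVW : W = W' := by
          apply Subtype.ext
          rw [← comap_cc W.1 v, ← comap_cc W'.1 v', hval]
        subst hVW
        have hdiff : v - v' ∈ W.1 := by
          have h1 : (v, (1:F)) ∈ cc W.1 v' := hval ▸ mem_cc_self W.1 v
          have h2 : (v', (1:F)) ∈ cc W.1 v' := mem_cc_self W.1 v'
          have h3 : ((v - v', (0:F)) : V × F) ∈ cc W.1 v' := by
            have := (cc W.1 v').sub_mem h1 h2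
            simpa using this
          have h4 : LinearMap.inl F V F (v - v') ∈ cc W.1 v' := h3
          rw [← comap_cc W.1 v']
          exact h4
        simp only [Sigma.mk.inj_iff, heq_eq_eq, true_and]
        exact (Submodule.Quotient.eq W.1).mpr hdiff
      · rintro ⟨X, hX, hXH⟩
        obtain ⟨x, hxX, hxH⟩ : ∃ x ∈ X, x ∉ H := Set.not_subset.mp fun hs => hXH hs
        have hb : x.2 ≠ 0 := by
          intro h; exact hxH (by rwa [hH, LinearMap.mem_ker])
        set u := x.2⁻¹ • x.1 with hu
        have hmem : ((u, (1:F)) : V × F) ∈ X := by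
          have : ((u, (1:F)) : V × F) = x.2⁻¹ • x := by
            simp [hu, Prod.ext_iff, inv_mul_cancel₀ hb]
          rw [this]
          exact X.smul_mem _ hxX
        set W : Submodule F V := X.comap (LinearMap.inl F V F) with hW
        have hXeq : X = cc W u := by
          apply le_antisymm
          · intro y hy
            have hy2 : y - y.2 • ((u, (1:F)) : V × F) ∈ X :=
              X.sub_mem hy (X.smul_mem _ hmem)
            have hkey : y - y.2 • ((u, (1:F)) : V × F)
                = LinearMap.inl F V F (y.1 - y.2 • u) := by
              simp [Prod.ext_iff]
            have hmem2 : y.1 - y.2 • u ∈ W := by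
              rw [hW, Submodule.mem_comap, ← hkey]; exact hy2
            have : y = LinearMap.inl F V F (y.1 - y.2 • u) + y.2 • ((u, (1:F)) : V × F) := by
              simp [Prod.ext_iff]
            rw [this]
            exact (cc W u).add_mem (map_inl_le_cc W u (Submodule.mem_map_of_mem hmem2))
              ((cc W u).smul_mem _ (mem_cc_self W u))
          · apply sup_le
            · rintro y ⟨w, hw, rfl⟩
              exact hw
            · rw [Submodule.span_le, Set.singleton_subset_iff]
              exact hmem
        have hWrank : finrank F W = j := by
          have := finrank_cc W u
          rw [← hXeq, hX] at this
          omega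
        refine ⟨⟨⟨W, hWrank⟩, Submodule.Quotient.mk u⟩, ?_⟩
        apply Subtype.ext
        show cc W u = X
        exact hXeq.symm
    rw [← Nat.card_eq_of_bijective _ hbij]
    haveI : ∀ (W : {W : Submodule F V // finrank F W = j}), Finite (V ⧸ W.1) :=
      fun W => Quotient.finite _
    apply card_sigma_const
    rintro ⟨W, hWr⟩
    haveI : Finite (V ⧸ W) := Quotient.finite _
    haveI := Fintype.ofFinite (V ⧸ W)
    rw [Nat.card_eq_fintype_card, card_eq_pow_finrank (K := F)]
    congr 1
    show finrank F (V ⧸ W) = finrank F V - j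
    have h5 := Submodule.finrank_quotient_add_finrank W
    rw [hWr] at h5
    omega

lemma lemB {W : Type} [AddCommGroup W] [Module F W] [FiniteDimensional F W]
    (j : ℕ) (hW : finrank F W = finrank F V - 1) (hV : 1 ≤ finrank F V) :
    (Fintype.card F ^ (finrank F V - j) - 1) * NN F V j
      = (Fintype.card F ^ finrank F V - 1) * NN F W j := by
  classical
  haveI : Finite V := Module.finite_of_finite F
  haveI : Finite (Module.Dual F V) := Module.finite_of_finite F
  haveI : Finite (Submodule F V) := finite_submodule V
  set n := finrank F V with hn
  set q := Fintype.card F with hq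
  -- two sigma types
  have key : Nat.card (Σ X : {X : Submodule F V // finrank F X = j},
        {f : Module.Dual F V // f ≠ 0 ∧ X.1 ≤ LinearMap.ker f})
      = Nat.card (Σ f : {f : Module.Dual F V // f ≠ 0},
        {X : Submodule F V // finrank F X = j ∧ X ≤ LinearMap.ker f.1}) := by
    apply Nat.card_congr
    exact { toFun := fun p => ⟨⟨p.2.1, p.2.2.1⟩, ⟨p.1.1, p.1.2, p.2.2.2⟩⟩
            invFun := fun p => ⟨⟨p.2.1, p.2.2.1⟩, ⟨p.1.1, p.1.2, p.2.2.2⟩⟩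
            left_inv := fun p => rfl
            right_inv := fun p => rfl }
  have h1 : Nat.card (Σ X : {X : Submodule F V // finrank F X = j},
        {f : Module.Dual F V // f ≠ 0 ∧ X.1 ≤ LinearMap.ker f})
      = (q ^ (n - j) - 1) * NN F V j := by
    apply card_sigma_const
    rintro ⟨X, hX⟩
    -- card of nonzero functionals vanishing on X
    have hmem : ∀ f : Module.Dual F V, X ≤ LinearMap.ker f ↔ f ∈ X.dualAnnihilator := by
      intro f
      rw [Submodule.mem_dualAnnihilator]
      constructor
      · intro h w hw; exact h hw
      · intro h w hw; exact h w hw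
    have e1 : {f : Module.Dual F V // f ≠ 0 ∧ X ≤ LinearMap.ker f}
        ≃ {g : X.dualAnnihilator // g ≠ 0} :=
      { toFun := fun f => ⟨⟨f.1, (hmem f.1).mp f.2.2⟩, by
          intro h; exact f.2.1 (congrArg Subtype.val h)⟩
        invFun := fun g => ⟨g.1.1, by
          refine ⟨fun h => g.2 (Subtype.ext h), (hmem g.1.1).mpr g.1.2⟩⟩
        left_inv := fun f => rfl
        right_inv := fun g => rfl }
    rw [Nat.card_congr e1, card_ne_aux (0 : X.dualAnnihilator)]
    have hcard : Nat.card X.dualAnnihilator = q ^ (n - j) := by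
      have e2 : (V ⧸ X) ≃ₗ[F] X.dualAnnihilator := Subspace.quotEquivAnnihilator X
      have hfr : finrank F (V ⧸ X) = n - j := by
        have := Submodule.finrank_quotient_add_finrank X
        omega
      haveI : Finite (V ⧸ X) := Quotient.finite _
      have := Fintype.ofFinite (V ⧸ X)
      rw [← Nat.card_congr e2.toEquiv, Nat.card_eq_fintype_card,
        card_eq_pow_finrank (K := F), hfr]
    rw [hcard]
  have h2 : Nat.card (Σ f : {f : Module.Dual F V // f ≠ 0},
        {X : Submodule F V // finrank F X = j ∧ X ≤ LinearMap.ker f.1})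
      = NN F W j * (q ^ n - 1) := by
    have hd : Nat.card {f : Module.Dual F V // f ≠ 0} = q ^ n - 1 := by
      rw [card_ne_aux (0 : Module.Dual F V)]
      have := Fintype.ofFinite (Module.Dual F V)
      rw [Nat.card_eq_fintype_card, card_eq_pow_finrank (K := F),
        Subspace.dual_finrank_eq]
    rw [← hd]
    apply card_sigma_const
    rintro ⟨f, hf⟩
    -- subspaces of ker f of dim j
    have hker : finrank F (LinearMap.ker f) = n - 1 := by
      have hr : LinearMap.range f = ⊤ := by
        obtain ⟨x, hx⟩ : ∃ x, f x ≠ 0 := by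
          by_contra h; push_neg at h; exact hf (LinearMap.ext fun x => h x)
        rw [LinearMap.range_eq_top]
        intro c
        exact ⟨(c * (f x)⁻¹) • x, by
          rw [map_smul, smul_eq_mul, mul_assoc, inv_mul_cancel₀ hx, mul_one]⟩
      have := LinearMap.finrank_range_add_finrank_ker f
      rw [hr, finrank_top] at this
      simp only [finrank_self] at this
      omega
    haveI : Finite (Submodule F (LinearMap.ker f)) := finite_submodule _
    have e3 : {X : Submodule F (LinearMap.ker f) // finrank F X = j}
        ≃ {X : Submodule F V // finrank F X = j ∧ X ≤ LinearMap.ker f} := by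
      refine (Equiv.subtypeEquiv (Submodule.MapSubtype.orderIso (LinearMap.ker f)).toEquiv
        fun X => ?_).trans ((Equiv.subtypeSubtypeEquivSubtypeInter _ _).trans
        (Equiv.subtypeEquivRight fun X => and_comm))
      show finrank F X = j ↔ finrank F (X.map (LinearMap.ker f).subtype) = j
      rw [Submodule.finrank_map_subtype_eq]
    have : NN F (LinearMap.ker f) j = NN F W j := by
      apply NN_eq_of_finrank_eq
      rw [hker, hW]
    rw [← this, NN]
    exact (Nat.card_congr e3).symm
  rw [← h1, key, h2]
  ring

end A


theorem stmt_6 (q n k : ℕ) (F : Type) [Field F] [Fintype F] (hq : Fintype.card F = q)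
    (hn : 1 ≤ n) (hk : 1 ≤ k) :
    Nat.card {X : Submodule F (Fin (n + 1) → F) // finrank F X = k} =
      Nat.card {X : Submodule F (Fin n → F) // finrank F X = k} +
        Nat.card {X : Submodule F (Fin n → F) // finrank F X = k - 1} +
        (q ^ n - 1) * Nat.card {X : Submodule F (Fin (n - 1) → F) // finrank F X = k - 1} := by
  subst hq
  obtain ⟨j, rfl⟩ : ∃ j, k = j + 1 := ⟨k - 1, by omega⟩
  simp only [Nat.add_sub_cancel]
  show NN F (Fin (n + 1) → F) (j + 1)
      = NN F (Fin n → F) (j + 1) + NN F (Fin n → F) j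
        + (Fintype.card F ^ n - 1) * NN F (Fin (n - 1) → F) j
  have h1 : NN F (Fin (n + 1) → F) (j + 1) = NN F ((Fin n → F) × F) (j + 1) := by
    apply NN_eq_of_finrank_eq
    rw [Module.finrank_fin_fun, Module.finrank_prod, Module.finrank_fin_fun, finrank_self]
  have h2 := lemA (F := F) (V := Fin n → F) j
  rw [Module.finrank_fin_fun] at h2
  have h3 := lemB (F := F) (V := Fin n → F) (W := Fin (n - 1) → F) j
    (by rw [Module.finrank_fin_fun, Module.finrank_fin_fun])
    (by rw [Module.finrank_fin_fun]; exact hn)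
  rw [Module.finrank_fin_fun] at h3
  have hpow : 1 ≤ Fintype.card F ^ (n - j) := Nat.one_le_pow _ _ Fintype.card_pos
  obtain ⟨m, hm⟩ := Nat.exists_eq_add_of_le hpow
  rw [h1, h2]
  have h4 : Fintype.card F ^ (n - j) * NN F (Fin n → F) j
      = NN F (Fin n → F) j + (Fintype.card F ^ (n - j) - 1) * NN F (Fin n → F) j := by
    rw [hm]
    have : 1 + m - 1 = m := by omega
    rw [this]
    ring
  rw [h4, h3]
  ring
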